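/- Let C be a nonempty closed convex subset of a Hilbert space H and T : C → C closed and quasi-asymptotically nonexpansive with sequence k_n → 1, i.e., ‖Tⁿ x − p‖² ≤ k_n ‖x − p‖² for all n ≥ 1, x ∈ C, p ∈ F(T) ≠ ∅, and assume T is uniformly L-Lipschitz. Then F(T) is closed and convex. -/

import Mathlib

open RealInnerProductSpace Filter Topology

lemma key_identity {H : Type*} [NormedAddCommGroup H] [InnerProductSpace ℝ H]
    (p q w : H) (a b : ℝ) (hab : a + b = 1) :
    ‖w - (a • p + b • q)‖ ^ 2 =
      a * ‖w - p‖ ^ 2 + b * ‖w - q‖ ^ 2 - a * b * ‖p - q‖ ^ 2 := by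
  have h : ∀ x : H, ‖x‖ ^ 2 = ⟪x, x⟫ := fun x => (real_inner_self_eq_norm_sq x).symm
  rw [h, h, h, h]
  simp only [inner_sub_left, inner_sub_right, inner_add_left, inner_add_right,
    real_inner_smul_left, real_inner_smul_right, real_inner_comm p q,
    real_inner_comm w p, real_inner_comm w q]
  linear_combination (a * (inner ℝ p p : ℝ) + b * (inner ℝ q q : ℝ) - (inner ℝ w w : ℝ)) * hab

/-- The fixed point set of a closed, uniformly L-Lipschitz, quasi-asymptotically
nonexpansive self-mapping (with sequence k_n → 1) is closed and convex. -/
theorem fixed_point_set_asymptotically_closed_convex {H : Type*} [NormedAddCommGroup H]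
    [InnerProductSpace ℝ H] (C : Set H) (hne : C.Nonempty) (hcl : IsClosed C)
    (hconv : Convex ℝ C) (T : H → H) (hT : Set.MapsTo T C C)
    (hF : {x ∈ C | T x = x}.Nonempty)
    (k : ℕ → ℝ) (hk1 : ∀ n, 1 ≤ k n) (hklim : Tendsto k atTop (nhds 1))
    (hqane : ∀ n ≥ 1, ∀ x ∈ C, ∀ p ∈ C, T p = p →
      ‖T^[n] x - p‖ ^ 2 ≤ k n * ‖x - p‖ ^ 2)
    (L : ℝ) (hL : 0 < L)
    (hlip : ∀ n ≥ 1, ∀ x ∈ C, ∀ y ∈ C, ‖T^[n] x - T^[n] y‖ ≤ L * ‖x - y‖)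
    (hclosed : ∀ (u : ℕ → H) (x y : H), (∀ n, u n ∈ C) →
      Tendsto u atTop (nhds x) → Tendsto (fun n => T (u n)) atTop (nhds y) → T x = y) :
    IsClosed {x ∈ C | T x = x} ∧ Convex ℝ {x ∈ C | T x = x} := by
  constructor
  · apply IsSeqClosed.isClosed
    intro u x hu hux
    refine ⟨hcl.mem_of_tendsto hux (Eventually.of_forall fun n => (hu n).1), ?_⟩
    refine hclosed u x x (fun n => (hu n).1) hux ?_
    have : (fun n => T (u n)) = u := funext fun n => (hu n).2
    rw [this]; exact hux
  · intro p hp q hq a b ha hb hab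
    set z : H := a • p + b • q with hz
    have hzC : z ∈ C := hconv hp.1 hq.1 ha hb hab
    have huC : ∀ n, T^[n] z ∈ C := fun n => hT.iterate n hzC
    -- key bound for n ≥ 1
    have hbound : ∀ n ≥ 1, ‖T^[n] z - z‖ ^ 2 ≤ (k n - 1) * (a * b * ‖p - q‖ ^ 2) := by
      intro n hn
      have hzp : ‖z - p‖ ^ 2 = b ^ 2 * ‖p - q‖ ^ 2 := by
        have : z - p = b • (q - p) := by
          rw [hz, smul_sub]
          have : a = 1 - b := by linarith
          rw [this]; module
        rw [this, norm_smul, Real.norm_eq_abs, abs_of_nonneg hb, norm_sub_rev, mul_pow]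
      have hzq : ‖z - q‖ ^ 2 = a ^ 2 * ‖p - q‖ ^ 2 := by
        have : z - q = a • (p - q) := by
          rw [hz, smul_sub]
          have : b = 1 - a := by linarith
          rw [this]; module
        rw [this, norm_smul, Real.norm_eq_abs, abs_of_nonneg ha, mul_pow]
      have h1 := hqane n hn z hzC p hp.1 hp.2
      have h2 := hqane n hn z hzC q hq.1 hq.2
      have hid := key_identity p q (T^[n] z) a b hab
      rw [← hz] at hid
      rw [hid]
      rw [hzp] at h1; rw [hzq] at h2
      have e : a * (k n * (b ^ 2 * ‖p - q‖ ^ 2)) + b * (k n * (a ^ 2 * ‖p - q‖ ^ 2))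
          = k n * (a * b * ‖p - q‖ ^ 2) := by
        linear_combination (k n * a * b * ‖p - q‖ ^ 2) * hab
      nlinarith [mul_le_mul_of_nonneg_left h1 ha, mul_le_mul_of_nonneg_left h2 hb, e]
    have hsq : Tendsto (fun n => ‖T^[n] z - z‖ ^ 2) atTop (nhds 0) := by
      have hub : Tendsto (fun n => (k n - 1) * (a * b * ‖p - q‖ ^ 2)) atTop (nhds 0) := by
        have : Tendsto (fun n => k n - 1) atTop (nhds 0) := by
          simpa using hklim.sub_const 1
        simpa using this.mul_const (a * b * ‖p - q‖ ^ 2)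
      refine squeeze_zero' ?_ ?_ hub
      · exact Eventually.of_forall fun n => sq_nonneg _
      · filter_upwards [eventually_ge_atTop 1] with n hn using hbound n hn
    have hnorm : Tendsto (fun n => ‖T^[n] z - z‖) atTop (nhds 0) := by
      have h := (Real.continuous_sqrt.tendsto 0).comp hsq
      rw [Real.sqrt_zero] at h
      exact h.congr fun n => by simp [Real.sqrt_sq (norm_nonneg _)]
    have htend : Tendsto (fun n => T^[n] z) atTop (nhds z) := by
      rw [tendsto_iff_norm_sub_tendsto_zero]
      exact hnorm
    have hTz : T z = z := by
      refine hclosed (fun n => T^[n] z) z z huC htend ?_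
      have : (fun n => T (T^[n] z)) = fun n => T^[n + 1] z := by
        funext n; rw [Function.iterate_succ_apply']
      rw [this]
      exact htend.comp (tendsto_add_atTop_nat 1)
    exact ⟨hzC, hTz⟩
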